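/- Let n be a positive integer, let x_1,…,x_n be nonnegative real numbers, let a_1,…,a_n and μ_1,…,μ_n be positive real numbers, let 1 < p ≤ 2, and let q satisfy 1/p + 1/q = 1. Set S = Σ_{j=1}^n μ_j^{1/(p-1)}·a_j^q. Then 0 ≤ Σ_{i=1}^n x_i^p/μ_i − (Σ_{i=1}^n a_i·x_i)^p / S^{p-1} ≤ (1/S^p)·Σ_{i=1}^n μ_i^{1/(p-1)}·a_i^q·| (1/(a_i·μ_i))^{1/(p-1)}·S·x_i − Σ_{j=1}^n a_j·x_j |^p. -/

import Mathlib

open Finset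

private lemma rpow_subadd {u v s : ℝ} (hu : 0 ≤ u) (hv : 0 ≤ v) (hs0 : 0 ≤ s) (hs1 : s ≤ 1) :
    (u + v) ^ s ≤ u ^ s + v ^ s := by
  lift u to NNReal using hu
  lift v to NNReal using hv
  have := NNReal.rpow_add_le_add_rpow u v hs0 hs1
  exact_mod_cast this

private lemma key_hasDerivAt {p : ℝ} (hp1 : 1 ≤ p) (b c : ℝ) (y : ℝ) :
    HasDerivAt (fun z : ℝ => (c * z + b) ^ p) (p * (c * y + b) ^ (p - 1) * c) y := by
  have h1 : HasDerivAt (fun z : ℝ => c * z + b) c y := by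
    simpa using ((hasDerivAt_id y).const_mul c).add_const b
  exact (Real.hasDerivAt_rpow_const (Or.inr hp1)).comp y h1

private lemma key_ineq {p : ℝ} (hp1 : 1 < p) (hp2 : p ≤ 2) {a b : ℝ} (ha : 0 ≤ a) (hb : 0 ≤ b) :
    a ^ p ≤ b ^ p + p * b ^ (p - 1) * (a - b) + |a - b| ^ p := by
  have hp0 : 0 < p := lt_trans one_pos hp1
  have hpm0 : 0 ≤ p - 1 := by linarith
  have hpm1 : p - 1 ≤ 1 := by linarith
  rcases le_total b a with hba | hab
  · rw [abs_of_nonneg (sub_nonneg.2 hba)]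
    set f : ℝ → ℝ := fun y => b ^ p + p * b ^ (p - 1) * (y - b) + (y - b) ^ p - y ^ p with hf
    have hderiv : ∀ y : ℝ, HasDerivAt f
        (p * b ^ (p - 1) + p * (y - b) ^ (p - 1) - p * y ^ (p - 1)) y := by
      intro y
      have h1 := key_hasDerivAt hp1.le (-b) 1 y
      have h2 := key_hasDerivAt hp1.le 0 1 y
      simp only [one_mul, mul_one, add_zero, ← sub_eq_add_neg] at h1 h2
      have h3 : HasDerivAt (fun z : ℝ => b ^ p + p * b ^ (p - 1) * (z - b))
          (p * b ^ (p - 1)) y := by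
        simpa using (((hasDerivAt_id y).sub_const b).const_mul (p * b ^ (p - 1))).const_add
          (b ^ p)
      exact (h3.add h1).sub h2
    have hmono : MonotoneOn f (Set.Ici b) := by
      apply monotoneOn_of_deriv_nonneg (convex_Ici b)
      · exact (continuous_iff_continuousAt.2 fun y => (hderiv y).continuousAt).continuousOn
      · intro y _; exact (hderiv y).differentiableAt.differentiableWithinAt
      · intro y hy
        rw [interior_Ici] at hy
        have hyb : b < y := hy
        rw [(hderiv y).deriv]
        have hsub : y ^ (p - 1) ≤ (y - b) ^ (p - 1) + b ^ (p - 1) := by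
          have := rpow_subadd (sub_nonneg.2 hyb.le) hb hpm0 hpm1
          rwa [sub_add_cancel] at this
        nlinarith
    have h0 : f b = 0 := by
      simp [hf, Real.zero_rpow hp0.ne']
    have := hmono (Set.self_mem_Ici) (Set.mem_Ici.2 hba) hba
    rw [h0] at this
    simp only [hf] at this
    linarith
  · rw [abs_of_nonpos (sub_nonpos.2 hab), neg_sub]
    set g : ℝ → ℝ := fun y => b ^ p + p * b ^ (p - 1) * (y - b) + (b - y) ^ p - y ^ p with hg
    have hderiv : ∀ y : ℝ, HasDerivAt g
        (p * b ^ (p - 1) - p * (b - y) ^ (p - 1) - p * y ^ (p - 1)) y := by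
      intro y
      have h1 := key_hasDerivAt hp1.le b (-1) y
      have h2 := key_hasDerivAt hp1.le 0 1 y
      simp only [one_mul, mul_one, add_zero, neg_one_mul, mul_neg_one,
        ← sub_eq_neg_add] at h1 h2
      have h3 : HasDerivAt (fun z : ℝ => b ^ p + p * b ^ (p - 1) * (z - b))
          (p * b ^ (p - 1)) y := by
        simpa using (((hasDerivAt_id y).sub_const b).const_mul (p * b ^ (p - 1))).const_add
          (b ^ p)
      have := (h3.add h1).sub h2
      exact this.congr_deriv (by ring)
    have hanti : AntitoneOn g (Set.Icc 0 b) := by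
      apply antitoneOn_of_deriv_nonpos (convex_Icc 0 b)
      · exact (continuous_iff_continuousAt.2 fun y => (hderiv y).continuousAt).continuousOn
      · intro y _; exact (hderiv y).differentiableAt.differentiableWithinAt
      · intro y hy
        rw [interior_Icc] at hy
        rw [(hderiv y).deriv]
        have hsub : b ^ (p - 1) ≤ y ^ (p - 1) + (b - y) ^ (p - 1) := by
          have := rpow_subadd hy.1.le (sub_nonneg.2 hy.2.le) hpm0 hpm1
          rwa [add_sub_cancel] at this
        nlinarith
    have h0 : g b = 0 := by
      simp [hg, Real.zero_rpow hp0.ne']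
    have := hanti (Set.mem_Icc.2 ⟨ha, hab⟩) (Set.mem_Icc.2 ⟨hb, le_refl b⟩) hab
    rw [h0] at this
    simp only [hg] at this
    linarith

open Finset in
/-- Corollary 3: two-sided bounds for 1 < p ≤ 2, combining convexity and
subquadraticity of x^p. -/
theorem euler_lagrange_two_sided (n : ℕ) (hn : 0 < n) (x : Fin n → ℝ)
    (hx : ∀ i, 0 ≤ x i) (a μ : Fin n → ℝ) (ha : ∀ i, 0 < a i) (hμ : ∀ i, 0 < μ i)
    (p q : ℝ) (hp1 : 1 < p) (hp2 : p ≤ 2) (hpq : 1 / p + 1 / q = 1)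
    (S : ℝ) (hS : S = ∑ j, μ j ^ (1 / (p - 1)) * a j ^ q) :
    0 ≤ ∑ i, x i ^ p / μ i - (∑ i, a i * x i) ^ p / S ^ (p - 1) ∧
    ∑ i, x i ^ p / μ i - (∑ i, a i * x i) ^ p / S ^ (p - 1) ≤
      (1 / S ^ p) * ∑ i, μ i ^ (1 / (p - 1)) * a i ^ q *
        |(1 / (a i * μ i)) ^ (1 / (p - 1)) * S * x i - ∑ j, a j * x j| ^ p := by
  have hp0 : (0:ℝ) < p := lt_trans one_pos hp1
  have hpm : (0:ℝ) < p - 1 := sub_pos.2 hp1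
  -- q = p / (p-1)
  have hq0 : 0 < q := by
    have h1 : 1/q = 1 - 1/p := by linarith
    have h2 : 1/p < 1 := by rw [div_lt_one hp0]; linarith
    have : 0 < 1/q := by rw [h1]; linarith
    exact one_div_pos.mp this
  have hq : q = p / (p - 1) := by
    rw [eq_div_iff hpm.ne']
    field_simp at hpq
    linarith
  set r : ℝ := 1 / (p - 1) with hr
  set w : Fin n → ℝ := fun i => μ i ^ r * a i ^ q with hw
  set t : Fin n → ℝ := fun i => (1 / (a i * μ i)) ^ r * S * x i with ht
  set T : ℝ := ∑ j, a j * x j with hT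
  set A : ℝ := ∑ i, x i ^ p / μ i with hA
  have hwpos : ∀ i, 0 < w i := fun i =>
    mul_pos (Real.rpow_pos_of_pos (hμ i) r) (Real.rpow_pos_of_pos (ha i) q)
  have hS0 : 0 < S := by
    rw [hS]
    exact Finset.sum_pos (fun i _ => hwpos i) (Finset.univ_nonempty_iff.2 ⟨⟨0, hn⟩⟩)
  have htnn : ∀ i, 0 ≤ t i := fun i =>
    mul_nonneg (mul_nonneg
      (Real.rpow_nonneg (one_div_pos.2 (mul_pos (ha i) (hμ i))).le r) hS0.le) (hx i)
  have hTnn : 0 ≤ T := Finset.sum_nonneg fun i _ => mul_nonneg (ha i).le (hx i)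
  -- helper rpow identity
  have hinv : ∀ i : Fin n, ∀ s : ℝ, (1 / (a i * μ i)) ^ s = a i ^ (-s) * μ i ^ (-s) := by
    intro i s
    rw [one_div, ← Real.rpow_neg_one (a i * μ i), ← Real.rpow_mul (mul_pos (ha i) (hμ i)).le,
      neg_one_mul, Real.mul_rpow (ha i).le (hμ i).le]
  -- w i * t i = S * (a i * x i)
  have hwt : ∀ i, w i * t i = S * (a i * x i) := by
    intro i
    have e1 : a i ^ q * a i ^ (-r) = a i := by
      rw [← Real.rpow_add (ha i), show q + -r = 1 by rw [hq, hr]; field_simp; ring,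
        Real.rpow_one]
    have e2 : μ i ^ r * μ i ^ (-r) = 1 := by
      rw [← Real.rpow_add (hμ i), add_neg_cancel, Real.rpow_zero]
    calc w i * t i
        = (a i ^ q * a i ^ (-r)) * (μ i ^ r * μ i ^ (-r)) * (S * x i) := by
          rw [hw, ht]; simp only []; rw [hinv i r]; ring
      _ = S * (a i * x i) := by rw [e1, e2]; ring
  -- w i * t i ^ p = S ^ p * (x i ^ p / μ i)
  have hwtp : ∀ i, w i * t i ^ p = S ^ p * (x i ^ p / μ i) := by
    intro i
    have htp : t i ^ p = a i ^ (-q) * μ i ^ (-q) * (S ^ p * x i ^ p) := by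
      rw [ht]; simp only []
      rw [Real.mul_rpow (mul_nonneg
          (Real.rpow_nonneg (one_div_pos.2 (mul_pos (ha i) (hμ i))).le r) hS0.le) (hx i),
        Real.mul_rpow (Real.rpow_nonneg (one_div_pos.2 (mul_pos (ha i) (hμ i))).le r) hS0.le,
        ← Real.rpow_mul (one_div_pos.2 (mul_pos (ha i) (hμ i))).le,
        show r * p = q by rw [hr, hq]; field_simp, hinv i q]
      ring
    have e3 : a i ^ q * a i ^ (-q) = 1 := by
      rw [← Real.rpow_add (ha i), add_neg_cancel, Real.rpow_zero]
    have e4 : μ i ^ r * μ i ^ (-q) = (μ i)⁻¹ := by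
      rw [← Real.rpow_add (hμ i),
        show r + -q = -1 by rw [hr, hq]; field_simp; ring, Real.rpow_neg_one]
    calc w i * t i ^ p
        = (a i ^ q * a i ^ (-q)) * (μ i ^ r * μ i ^ (-q)) * (S ^ p * x i ^ p) := by
          rw [hw, htp]; ring
      _ = S ^ p * (x i ^ p / μ i) := by rw [e3, e4]; ring
  have hSw : ∑ i, w i = S := hS.symm
  have hsum1 : ∑ i, w i * t i = S * T := by
    rw [hT, Finset.mul_sum]
    exact Finset.sum_congr rfl fun i _ => hwt i
  have hsum2 : ∑ i, w i * t i ^ p = S ^ p * A := by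
    rw [hA, Finset.mul_sum]
    exact Finset.sum_congr rfl fun i _ => hwtp i
  have hSp : (0:ℝ) < S ^ p := Real.rpow_pos_of_pos hS0 p
  have hSp1 : (0:ℝ) < S ^ (p - 1) := Real.rpow_pos_of_pos hS0 _
  have hSS : S ^ (p - 1) * S = S ^ p := by
    rw [← Real.rpow_add_one hS0.ne', sub_add_cancel]
  -- Jensen's inequality
  have hwsum : ∑ i, w i / S = 1 := by
    rw [← Finset.sum_div, hSw, div_self hS0.ne']
  have hJ := Real.rpow_arith_mean_le_arith_mean_rpow Finset.univ (fun i => w i / S) t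
    (fun i _ => div_nonneg (hwpos i).le hS0.le) hwsum (fun i _ => htnn i) hp1.le
  have eL : ∑ i, w i / S * t i = T := by
    have : ∑ i, w i / S * t i = (∑ i, w i * t i) / S := by
      rw [Finset.sum_div]
      exact Finset.sum_congr rfl fun i _ => div_mul_eq_mul_div _ _ _
    rw [this, hsum1, mul_comm, mul_div_assoc, div_self hS0.ne', mul_one]
  have eR : ∑ i, w i / S * t i ^ p = S ^ p * A / S := by
    have : ∑ i, w i / S * t i ^ p = (∑ i, w i * t i ^ p) / S := by
      rw [Finset.sum_div]
      exact Finset.sum_congr rfl fun i _ => div_mul_eq_mul_div _ _ _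
    rw [this, hsum2]
  rw [eL, eR] at hJ
  have key1 : T ^ p ≤ S ^ (p - 1) * A := by
    have e : S ^ p * A / S = S ^ (p - 1) * A := by
      rw [← hSS]; field_simp
    linarith [hJ, e ▸ hJ]
  constructor
  · have h1 : T ^ p / S ^ (p - 1) ≤ A := by
      rw [div_le_iff₀ hSp1]
      nlinarith [key1]
    linarith
  -- Part 2
  · have hptw : ∀ i ∈ Finset.univ, w i * t i ^ p ≤
        w i * (T ^ p + p * T ^ (p - 1) * (t i - T) + |t i - T| ^ p) := fun i _ =>
      mul_le_mul_of_nonneg_left (key_ineq hp1 hp2 (htnn i) hTnn) (hwpos i).le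
    set R : ℝ := ∑ i, w i * |t i - T| ^ p with hR
    have s1 : ∑ i, w i * T ^ p = S * T ^ p := by
      rw [← Finset.sum_mul, hSw]
    have s2 : ∑ i, w i * (p * T ^ (p - 1) * (t i - T)) = 0 := by
      have e5 : ∀ i : Fin n, w i * (p * T ^ (p - 1) * (t i - T)) =
          p * T ^ (p - 1) * (w i * t i) - p * T ^ (p - 1) * T * w i := fun i => by ring
      rw [Finset.sum_congr rfl fun i _ => e5 i, Finset.sum_sub_distrib,
        ← Finset.mul_sum, ← Finset.mul_sum, hsum1, hSw]
      ring
    have key2 : S ^ p * A ≤ S * T ^ p + R := by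
      have h := Finset.sum_le_sum hptw
      rw [hsum2] at h
      have expand : ∑ i, w i * (T ^ p + p * T ^ (p - 1) * (t i - T) + |t i - T| ^ p)
          = (∑ i, w i * T ^ p) + (∑ i, w i * (p * T ^ (p - 1) * (t i - T))) + R := by
        rw [hR, ← Finset.sum_add_distrib, ← Finset.sum_add_distrib]
        exact Finset.sum_congr rfl fun i _ => by ring
      rw [expand, s1, s2] at h
      linarith
    have e : T ^ p / S ^ (p - 1) * S ^ p = S * T ^ p := by
      rw [← hSS]; field_simp
    have final : A - T ^ p / S ^ (p - 1) ≤ R / S ^ p := by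
      rw [le_div_iff₀ hSp, sub_mul, e]
      nlinarith [key2]
    rw [one_div, inv_mul_eq_div]
    exact final
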